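/- Let H be a Hilbert space and t₁, t₂, s₁, s₂ ∈ B(H) isometries with t₁t₁* + t₂t₂* = I and s₁s₁* + s₂s₂* = I. On H ⊕ H ⊕ H, define u₁ as the 3×3 operator block matrix with rows (t₁*, 0, 0), (s₁t₂*, s₂s₁*, 0), (0, t₂s₂*, t₁), and u₂ with rows (t₁t₂*, 0, t₂t₁*), (s₂t₁*, s₁, 0), (0, 0, t₂*). Then u₁ and u₂ are unitary operators on H ⊕ H ⊕ H. -/
import Mathlib


open ContinuousLinearMap

section Aux

variable {R : Type*} [Ring R] [StarRing R] (a b : R)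

lemma aux_lcancel (h : star a * a = 1) (x : R) : star a * (a * x) = x := by
  rw [← mul_assoc, h, one_mul]

lemma aux_lzero (h : star a * b = 0) (x : R) : star a * (b * x) = 0 := by
  rw [← mul_assoc, h, zero_mul]

end Aux

set_option maxHeartbeats 1000000 in
/-- the block operator matrices u₁, u₂ built from two Cuntz
families t₁,t₂ and s₁,s₂ are unitary on H ⊕ H ⊕ H (represented as 3×3
operator block matrices). -/
theorem stmt16 {H : Type*} [NormedAddCommGroup H] [InnerProductSpace ℂ H]
    [CompleteSpace H]
    (t₁ t₂ s₁ s₂ : H →L[ℂ] H)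
    (ht₁ : star t₁ * t₁ = 1) (ht₂ : star t₂ * t₂ = 1)
    (hs₁ : star s₁ * s₁ = 1) (hs₂ : star s₂ * s₂ = 1)
    (hCt : t₁ * star t₁ + t₂ * star t₂ = 1)
    (hCs : s₁ * star s₁ + s₂ * star s₂ = 1)
    (u₁ u₂ : Matrix (Fin 3) (Fin 3) (H →L[ℂ] H))
    (h₁ : u₁ = !![star t₁, 0, 0;
                  s₁ * star t₂, s₂ * star s₁, 0;
                  0, t₂ * star s₂, t₁])
    (h₂ : u₂ = !![t₁ * star t₂, 0, t₂ * star t₁;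
                  s₂ * star t₁, s₁, 0;
                  0, 0, star t₂]) :
    star u₁ * u₁ = 1 ∧ u₁ * star u₁ = 1 ∧
    star u₂ * u₂ = 1 ∧ u₂ * star u₂ = 1 := by
  have key : ∀ a b : H →L[ℂ] H, star a * a = 1 → star b * b = 1 →
      a * star a + b * star b = 1 → star a * b = 0 := by
    intro a b ha hb hC
    rw [← CStarRing.star_mul_self_eq_zero_iff]
    have haa : a * star a = 1 - b * star b := by rw [← hC]; abel
    calc star (star a * b) * (star a * b)
        = star b * (a * star a) * b := by simp [mul_assoc]
      _ = 0 := by rw [haa]; simp [mul_sub, sub_mul, mul_assoc, hb]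
  have ht12 : star t₁ * t₂ = 0 := key t₁ t₂ ht₁ ht₂ hCt
  have ht21 : star t₂ * t₁ = 0 := by
    have := congrArg star ht12; simpa using this
  have hs12 : star s₁ * s₂ = 0 := key s₁ s₂ hs₁ hs₂ hCs
  have hs21 : star s₂ * s₁ = 0 := by
    have := congrArg star hs12; simpa using this
  have hCt' : t₂ * star t₂ + t₁ * star t₁ = 1 := by rw [← hCt]; abel
  have hCs' : s₂ * star s₂ + s₁ * star s₁ = 1 := by rw [← hCs]; abel
  subst h₁ h₂
  refine ⟨?_, ?_, ?_, ?_⟩ <;>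
  · apply Matrix.ext; intro i j
    fin_cases i <;> fin_cases j <;>
      simp [Matrix.mul_apply, Fin.sum_univ_three, Matrix.one_apply, star_mul, mul_assoc,
        aux_lcancel _ ht₁, aux_lcancel _ ht₂, aux_lcancel _ hs₁, aux_lcancel _ hs₂,
        aux_lzero _ _ ht12, aux_lzero _ _ ht21, aux_lzero _ _ hs12, aux_lzero _ _ hs21,
        ht₁, ht₂, hs₁, hs₂, ht12, ht21, hs12, hs21, hCt, hCs, hCt', hCs']
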